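/- Let n ≥ 2 and let A, B ∈ GL_n(ℂ) with AB⁻¹ a pseudo-reflection and spec(A) ∩ spec(B) = ∅. Then the pair (A, B) is linearly rigid: for any A', B' ∈ GL_n(ℂ) with A' conjugate to A, B' conjugate to B, and A'·(B')⁻¹ a pseudo-reflection, there exists U ∈ GL_n(ℂ) with A' = U A U⁻¹ and B' = U B U⁻¹. -/

import Mathlib

open Matrix Polynomial

namespace Stmt16

variable {n : ℕ}

lemma eval_charpoly' (M : Matrix (Fin n) (Fin n) ℂ) (x : ℂ) :
    M.charpoly.eval x = (x • (1 : Matrix (Fin n) (Fin n) ℂ) - M).det := by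
  rw [Matrix.charpoly, ← coe_evalRingHom, RingHom.map_det]
  congr 1
  ext i j
  by_cases h : i = j <;>
    simp [h, charmatrix_apply, Matrix.sub_apply, Matrix.smul_apply, Matrix.one_apply,
      Matrix.diagonal_apply, RingHom.mapMatrix_apply, Matrix.map_apply]

lemma mem_spectrum_iff' (M : Matrix (Fin n) (Fin n) ℂ) (μ : ℂ) :
    μ ∈ spectrum ℂ M ↔ M.charpoly.eval μ = 0 := by
  rw [spectrum.mem_iff, eval_charpoly', Matrix.isUnit_iff_isUnit_det, isUnit_iff_ne_zero,
    not_ne_iff]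
  congr! 2
  rw [Matrix.algebraMap_eq_diagonal]
  ext i j
  by_cases h : i = j <;> simp [h, Matrix.diagonal_apply, Matrix.smul_apply, Matrix.one_apply]

lemma charpoly_conj (P M : Matrix (Fin n) (Fin n) ℂ) (hP : IsUnit P) :
    (P * M * P⁻¹).charpoly = M.charpoly := by
  have hPd : IsUnit P.det := (Matrix.isUnit_iff_isUnit_det P).mp hP
  have hmap : ∀ X Y : Matrix (Fin n) (Fin n) ℂ,
      (C : ℂ →+* ℂ[X]).mapMatrix (X * Y) =
        (C : ℂ →+* ℂ[X]).mapMatrix X * (C : ℂ →+* ℂ[X]).mapMatrix Y := fun X Y => by simp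
  have h1 : (C : ℂ →+* ℂ[X]).mapMatrix P * (C : ℂ →+* ℂ[X]).mapMatrix P⁻¹ = 1 := by
    rw [← hmap, Matrix.mul_nonsing_inv P hPd]; simp
  unfold Matrix.charpoly
  have hch : charmatrix (P * M * P⁻¹) =
      (C : ℂ →+* ℂ[X]).mapMatrix P * charmatrix M * (C : ℂ →+* ℂ[X]).mapMatrix P⁻¹ := by
    unfold charmatrix
    rw [Matrix.mul_sub, Matrix.sub_mul, hmap, hmap]
    congr 1
    rw [Matrix.mul_assoc, Matrix.scalar_commute (X : ℂ[X]) (fun r => Commute.all _ r),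
      ← Matrix.mul_assoc, h1, Matrix.one_mul]
  rw [hch, Matrix.det_mul, Matrix.det_mul, mul_comm, ← mul_assoc, ← Matrix.det_mul, ← hmap,
    Matrix.nonsing_inv_mul P hPd]
  simp

lemma vecMulVec_mulVec (v w x : Fin n → ℂ) :
    (vecMulVec v w).mulVec x = (w ⬝ᵥ x) • v := by
  ext i
  simp [Matrix.mulVec, vecMulVec_apply, dotProduct, Finset.mul_sum, mul_comm, mul_assoc,
    mul_left_comm]

lemma exists_vecMulVec {M : Matrix (Fin n) (Fin n) ℂ} (h : M.rank ≤ 1) :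
    ∃ v w : Fin n → ℂ, M = vecMulVec v w := by
  rw [Matrix.rank] at h
  obtain ⟨v₀, hv₀⟩ := finrank_le_one_iff.mp h
  refine ⟨v₀.1, fun j => (hv₀ ⟨M.mulVec (Pi.single j 1), LinearMap.mem_range.mpr
      ⟨Pi.single j 1, rfl⟩⟩).choose, ?_⟩
  ext i j
  have hc := (hv₀ ⟨M.mulVec (Pi.single j 1), LinearMap.mem_range.mpr
      ⟨Pi.single j 1, rfl⟩⟩).choose_spec
  have := congrArg (fun z : ↥(LinearMap.range M.mulVecLin) => (z : Fin n → ℂ) i) hc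
  simp only [Submodule.coe_smul, Pi.smul_apply, smul_eq_mul] at this
  rw [vecMulVec_apply, mul_comm]
  rw [this]
  simp [Matrix.mulVec_single]

lemma divX_iter_coeff (p : ℂ[X]) (k i : ℕ) : (Polynomial.divX^[k] p).coeff i = p.coeff (i + k) := by
  induction k generalizing i with
  | zero => simp
  | succ k ih =>
    rw [Function.iterate_succ_apply', Polynomial.coeff_divX, ih]
    congr 1
    omega

lemma divX_iter_full {p : ℂ[X]} (hm : p.Monic) (hd : p.natDegree = n) :
    Polynomial.divX^[n] p = 1 := by
  ext i
  rw [divX_iter_coeff, Polynomial.coeff_one]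
  rcases Nat.eq_zero_or_pos i with hi | hi
  · subst hi
    simpa [← hd] using hm.coeff_natDegree
  · rw [if_neg (by omega)]
    exact Polynomial.coeff_eq_zero_of_natDegree_lt (by omega)

lemma divX_iter_rec (p : ℂ[X]) (k : ℕ) (x : ℂ) :
    (Polynomial.divX^[k] p).eval x = x * (Polynomial.divX^[k+1] p).eval x + p.coeff k := by
  conv_lhs => rw [← Polynomial.X_mul_divX_add (Polynomial.divX^[k] p)]
  rw [Function.iterate_succ_apply']
  simp [divX_iter_coeff, mul_comm]

lemma c_unique (hn : 0 < n) {p q : ℂ[X]} (hm : p.Monic) (hd : p.natDegree = n)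
    (c c' : Fin n → ℂ)
    (h : ∀ x : ℂ, p.eval x ≠ 0 →
      q.eval x = p.eval x + ∑ k : Fin n, c k * (Polynomial.divX^[(k:ℕ)+1] p).eval x)
    (h' : ∀ x : ℂ, p.eval x ≠ 0 →
      q.eval x = p.eval x + ∑ k : Fin n, c' k * (Polynomial.divX^[(k:ℕ)+1] p).eval x) :
    c = c' := by
  set d : Fin n → ℂ := fun k => c k - c' k with hdd
  set Pd : ℂ[X] := ∑ k : Fin n, C (d k) * Polynomial.divX^[(k:ℕ)+1] p with hPd
  have hPd0 : Pd = 0 := by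
    apply Polynomial.eq_zero_of_infinite_isRoot
    apply Set.Infinite.mono (s := {x : ℂ | ¬ p.IsRoot x})
    · intro x hx
      have hpx : p.eval x ≠ 0 := hx
      have := (h x hpx).symm.trans (h' x hpx)
      simp only [Set.mem_setOf_eq, IsRoot.def, hPd, Polynomial.eval_finset_sum,
        Polynomial.eval_mul, Polynomial.eval_C]
      simp only [hdd, sub_mul, Finset.sum_sub_distrib]
      rw [sub_eq_zero]
      exact add_left_cancel this
    · have hfin := (Polynomial.finite_setOf_isRoot (p := p) hm.ne_zero).infinite_compl
      convert hfin using 1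
      ext x; simp
  have hzero : ∀ m : ℕ, ∀ j : Fin n, (j : ℕ) = m → d j = 0 := by
    intro m
    induction m using Nat.strong_induction_on with
    | _ m ih =>
      intro j hj
      subst hj
      have hcoeff := congrArg (fun r : ℂ[X] => r.coeff (n - 1 - (j : ℕ))) hPd0
      simp only [hPd, Polynomial.finset_sum_coeff, Polynomial.coeff_C_mul, divX_iter_coeff,
        Polynomial.coeff_zero] at hcoeff
      rw [Finset.sum_eq_single j] at hcoeff
      · have hj' : (j : ℕ) ≤ n - 1 := by omega
        have : n - 1 - (j : ℕ) + ((j : ℕ) + 1) = n := by omega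
        rw [this, ← hd] at hcoeff
        rw [hm.coeff_natDegree, mul_one] at hcoeff
        exact hcoeff
      · intro k _ hkj
        rcases lt_or_gt_of_ne (fun hkk : (k : ℕ) = (j : ℕ) => hkj (Fin.ext hkk)) with hlt | hgt
        · rw [ih (k : ℕ) (by omega) k rfl, zero_mul]
        · rw [Polynomial.coeff_eq_zero_of_natDegree_lt, mul_zero]
          rw [hd]
          have := j.isLt
          omega
      · intro hj'
        exact absurd (Finset.mem_univ j) hj'
  funext k
  have hk := hzero (k : ℕ) k rfl
  simp only [hdd] at hk
  exact sub_eq_zero.mp hk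

/-- companion-type canonical form for `A` -/
def canA (p : ℂ[X]) : Matrix (Fin n) (Fin n) ℂ :=
  Matrix.of fun i k : Fin n => if (k : ℕ) + 1 = n then -p.coeff i
    else if (i : ℕ) = (k : ℕ) + 1 then 1 else 0

/-- canonical form for `B` -/
def canB (p : ℂ[X]) (c : Fin n → ℂ) : Matrix (Fin n) (Fin n) ℂ :=
  Matrix.of fun i k : Fin n => canA p i k - (if (i : ℕ) = 0 then c k else 0)

lemma pair_canonical (hn : 0 < n) (A B : Matrix (Fin n) (Fin n) ℂ) (v w : Fin n → ℂ)
    (hvw : A - B = vecMulVec v w)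
    (hdisj : ∀ x : ℂ, A.charpoly.eval x = 0 → B.charpoly.eval x ≠ 0) :
    ∃ (P : Matrix (Fin n) (Fin n) ℂ) (c : Fin n → ℂ), IsUnit P ∧
      A * P = P * canA A.charpoly ∧ B * P = P * canB A.charpoly c ∧
      ∀ x : ℂ, A.charpoly.eval x ≠ 0 →
        B.charpoly.eval x = A.charpoly.eval x +
          ∑ k : Fin n, c k * (Polynomial.divX^[(k:ℕ)+1] A.charpoly).eval x := by
  classical
  set χ := A.charpoly with hχ
  have hmon : χ.Monic := A.charpoly_monic
  have hdeg : χ.natDegree = n := by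
    rw [hχ, Matrix.charpoly_natDegree_eq_dim, Fintype.card_fin]
  set b : ℕ → (Fin n → ℂ) := fun k => (A ^ k).mulVec v with hbdef
  have hb0 : b 0 = v := by simp [hbdef]
  have hbs : ∀ k : ℕ, b (k + 1) = A.mulVec (b k) := by
    intro k
    simp [hbdef, pow_succ', ← Matrix.mulVec_mulVec]
  have hABx : ∀ x : Fin n → ℂ, B.mulVec x = A.mulVec x - (w ⬝ᵥ x) • v := by
    intro x
    have h := congrArg (fun M : Matrix (Fin n) (Fin n) ℂ => M.mulVec x) hvw
    simp only [Matrix.sub_mulVec, vecMulVec_mulVec] at h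
    rw [← h, sub_sub_cancel]
  have hsum_mulVec : ∀ (s : Finset (Fin n)) (M : Fin n → Matrix (Fin n) (Fin n) ℂ)
      (x : Fin n → ℂ), (∑ j ∈ s, M j).mulVec x = ∑ j ∈ s, (M j).mulVec x := by
    intro s M x
    induction s using Finset.induction with
    | empty => simp [Matrix.zero_mulVec]
    | insert _ _ h ih => rw [Finset.sum_insert h, Finset.sum_insert h, Matrix.add_mulVec, ih]
  have hcn : χ.coeff n = 1 := by rw [← hdeg]; exact hmon.coeff_natDegree
  have hAn : A ^ n = -∑ j : Fin n, χ.coeff (j : ℕ) • A ^ (j : ℕ) := by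
    have h0 := Matrix.aeval_self_charpoly A
    rw [Polynomial.aeval_eq_sum_range, ← hχ, hdeg, Finset.sum_range_succ, hcn, one_smul] at h0
    rw [← Fin.sum_univ_eq_sum_range (fun i => χ.coeff i • A ^ i) n] at h0
    linear_combination (norm := abel) h0
  have hbn : b n = -∑ j : Fin n, χ.coeff (j : ℕ) • b (j : ℕ) := by
    show (A ^ n).mulVec v = _
    rw [hAn, Matrix.neg_mulVec, hsum_mulVec]
    congr 1
    refine Finset.sum_congr rfl fun j _ => ?_
    rw [Matrix.smul_mulVec]
  -- the cyclic subspace is everything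
  set W : Submodule ℂ (Fin n → ℂ) := Submodule.span ℂ (Set.range fun k : ℕ => b k) with hW
  have hmemW : ∀ k, b k ∈ W := fun k => Submodule.subset_span ⟨k, rfl⟩
  have hAW : ∀ x ∈ W, A.mulVec x ∈ W := by
    intro x hx
    induction hx using Submodule.span_induction with
    | mem y hy =>
      obtain ⟨k, rfl⟩ := hy
      rw [← hbs k]; exact hmemW _
    | zero => rw [Matrix.mulVec_zero]; exact W.zero_mem
    | add y z hy hz hy' hz' => rw [Matrix.mulVec_add]; exact W.add_mem hy' hz'
    | smul t y hy hy' => rw [Matrix.mulVec_smul]; exact W.smul_mem t hy'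
  have hWtop : W = ⊤ := by
    by_contra hWne
    have hann : W.dualAnnihilator ≠ ⊥ := by
      intro h
      exact hWne (Subspace.dualAnnihilator_inj.mp (h.trans Submodule.dualAnnihilator_top.symm))
    haveI : Nontrivial W.dualAnnihilator := Submodule.nontrivial_iff_ne_bot.mpr hann
    set T : Module.End ℂ (Module.Dual ℂ (Fin n → ℂ)) := (Matrix.mulVecLin A).dualMap with hT
    have hTinv : ∀ φ ∈ W.dualAnnihilator, T φ ∈ W.dualAnnihilator := by
      intro φ hφ
      rw [Submodule.mem_dualAnnihilator] at hφ ⊢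
      intro y hy
      exact hφ _ (hAW y hy)
    obtain ⟨μ, hμ⟩ := Module.End.exists_eigenvalue (T.restrict hTinv)
    obtain ⟨⟨φ, hφmem⟩, hev⟩ := hμ.exists_hasEigenvector
    have hφ0 : φ ≠ 0 := fun h => hev.2 (Subtype.ext h)
    have hTφ : ∀ x, φ (A.mulVec x) = μ * φ x := by
      have h2 := congrArg Subtype.val hev.apply_eq_smul
      intro x
      have h3 := congrArg (fun ψ : Module.Dual ℂ (Fin n → ℂ) => ψ x) h2
      simpa [LinearMap.restrict_apply, hT] using h3
    have hroot : ∀ (M : Matrix (Fin n) (Fin n) ℂ), (∀ x, φ (M.mulVec x) = μ * φ x) →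
        M.charpoly.eval μ = 0 := by
      intro M hM
      by_contra hne
      have hdet : IsUnit (μ • (1 : Matrix (Fin n) (Fin n) ℂ) - M) := by
        rw [Matrix.isUnit_iff_isUnit_det, ← eval_charpoly']
        exact isUnit_iff_ne_zero.mpr hne
      have hsurj := Matrix.mulVec_surjective_iff_isUnit.mpr hdet
      have hker : ∀ y, φ y = 0 := by
        intro y
        obtain ⟨x, hx⟩ := hsurj y
        have h4 : φ ((μ • (1 : Matrix (Fin n) (Fin n) ℂ) - M).mulVec x) = 0 := by
          rw [Matrix.sub_mulVec, map_sub, hM, Matrix.smul_mulVec, Matrix.one_mulVec,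
            LinearMap.map_smul]
          simp [smul_eq_mul]
        rw [hx] at h4
        exact h4
      exact hφ0 (LinearMap.ext hker)
    have hv0 : φ v = 0 := ((Submodule.mem_dualAnnihilator φ).mp hφmem) v (hb0 ▸ hmemW 0)
    have hAroot := hroot A hTφ
    have hBroot := hroot B (fun x => by
      rw [hABx x, map_sub, LinearMap.map_smul, hTφ, hv0]
      simp)
    exact hdisj μ hAroot hBroot
  set W' : Submodule ℂ (Fin n → ℂ) :=
    Submodule.span ℂ (Set.range fun k : Fin n => b (k : ℕ)) with hW'
  have hmemW' : ∀ k : Fin n, b (k : ℕ) ∈ W' := fun k => Submodule.subset_span ⟨k, rfl⟩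
  have hAW' : ∀ x ∈ W', A.mulVec x ∈ W' := by
    intro x hx
    induction hx using Submodule.span_induction with
    | mem y hy =>
      obtain ⟨k, rfl⟩ := hy
      rw [← hbs]
      rcases Nat.lt_or_ge ((k : ℕ) + 1) n with hlt | hge
      · exact hmemW' ⟨(k : ℕ) + 1, hlt⟩
      · have hkn : (k : ℕ) + 1 = n := by have := k.isLt; omega
        rw [hkn, hbn]
        exact Submodule.neg_mem _ (Submodule.sum_mem _ fun j _ =>
          Submodule.smul_mem _ _ (hmemW' j))
    | zero => rw [Matrix.mulVec_zero]; exact W'.zero_mem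
    | add y z hy hz hy' hz' => rw [Matrix.mulVec_add]; exact W'.add_mem hy' hz'
    | smul t y hy hy' => rw [Matrix.mulVec_smul]; exact W'.smul_mem t hy'
  have hballW' : ∀ k : ℕ, b k ∈ W' := by
    intro k
    induction k with
    | zero => exact hmemW' ⟨0, hn⟩
    | succ k ih => rw [hbs]; exact hAW' _ ih
  have hW'top : W' = ⊤ := top_unique (by
    rw [← hWtop]
    exact Submodule.span_le.mpr (by rintro _ ⟨k, rfl⟩; exact hballW' k))
  set P : Matrix (Fin n) (Fin n) ℂ := Matrix.of (fun i k : Fin n => b (k : ℕ) i) with hP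
  have hPcol : ∀ k : Fin n, P.mulVec (Pi.single k 1) = b (k : ℕ) := by
    intro k; ext i; simp [hP, Matrix.mulVec_single]
  have hPunit : IsUnit P := by
    rw [← Matrix.mulVec_surjective_iff_isUnit]
    have hrange : W' ≤ LinearMap.range P.mulVecLin := by
      rw [hW', Submodule.span_le]
      rintro _ ⟨k, rfl⟩
      exact ⟨Pi.single k 1, hPcol k⟩
    intro y
    obtain ⟨x, hx⟩ := hrange (hW'top ▸ Submodule.mem_top (x := y))
    exact ⟨x, hx⟩
  set c : Fin n → ℂ := fun k => w ⬝ᵥ b (k : ℕ) with hc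
  have hmul_apply : ∀ (M : Matrix (Fin n) (Fin n) ℂ) (i k : Fin n),
      (M * P) i k = M.mulVec (b (k : ℕ)) i := by
    intro M i k
    simp [Matrix.mul_apply, hP, Matrix.mulVec, dotProduct]
  have hAP : A * P = P * canA χ := by
    ext i k
    rw [hmul_apply, Matrix.mul_apply]
    by_cases hk : (k : ℕ) + 1 = n
    · rw [← hbs, hk, hbn]
      simp only [canA, Matrix.of_apply, if_pos hk, hP]
      simp only [Matrix.of_apply, Pi.neg_apply, Finset.sum_apply, Pi.smul_apply, smul_eq_mul,
        mul_neg, ← Finset.sum_neg_distrib]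
      exact Finset.sum_congr rfl fun j _ => by ring
    · have hlt : (k : ℕ) + 1 < n := lt_of_le_of_ne k.isLt hk
      rw [← hbs]
      rw [Finset.sum_eq_single (⟨(k : ℕ) + 1, hlt⟩ : Fin n)]
      · simp [canA, hP, hk]
      · intro j _ hj
        simp only [canA, Matrix.of_apply, if_neg hk, hP]
        rw [if_neg, mul_zero]
        intro hj'
        exact hj (Fin.ext (by simpa using hj'))
      · intro h; exact absurd (Finset.mem_univ _) h
  have hBP : B * P = P * canB χ c := by
    ext i k
    rw [hmul_apply, hABx]
    have h1 : (P * canB (n := n) χ c) i k = (P * canA (n := n) χ) i k - b 0 i * c k := by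
      rw [Matrix.mul_apply, Matrix.mul_apply]
      have hterm : ∀ j : Fin n, P i j * canB (n := n) χ c j k =
          P i j * canA (n := n) χ j k - P i j * (if (j : ℕ) = 0 then c k else 0) := fun j => by
        simp [canB, mul_sub]
      rw [Finset.sum_congr rfl (fun j _ => hterm j), Finset.sum_sub_distrib]
      congr 1
      rw [Finset.sum_eq_single (⟨0, hn⟩ : Fin n)]
      · simp [hP]
      · intro j _ hj
        rw [if_neg, mul_zero]
        intro hj'
        exact hj (Fin.ext (by simpa using hj'))
      · intro h; exact absurd (Finset.mem_univ _) h
    rw [h1, ← hAP, hmul_apply, hb0]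
    simp only [Pi.sub_apply, Pi.smul_apply, smul_eq_mul, hc]
    ring
  have hcharid : ∀ x : ℂ, χ.eval x ≠ 0 → B.charpoly.eval x =
      χ.eval x + ∑ k : Fin n, c k * (Polynomial.divX^[(k:ℕ)+1] χ).eval x := by
    intro x hx
    set E : ℕ → ℂ := fun k => (Polynomial.divX^[k] χ).eval x with hE
    have hE0 : E 0 = χ.eval x := by simp [hE]
    have hEn : E n = 1 := by
      show (Polynomial.divX^[n] χ).eval x = 1
      rw [divX_iter_full hmon hdeg]; simp
    have hErec : ∀ k, x * E (k + 1) = E k - χ.coeff k := by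
      intro k
      have h := divX_iter_rec χ k x
      show x * (Polynomial.divX^[k+1] χ).eval x =
        (Polynomial.divX^[k] χ).eval x - χ.coeff k
      linear_combination -h
    set r : Fin n → ℂ := ∑ k : Fin n, E ((k : ℕ) + 1) • b (k : ℕ) with hr
    have hAr : A.mulVec r = ∑ k : Fin n, E ((k : ℕ) + 1) • b ((k : ℕ) + 1) := by
      show A.mulVecLin r = _
      rw [hr, map_sum]
      refine Finset.sum_congr rfl fun k _ => ?_
      rw [LinearMap.map_smul, Matrix.mulVecLin_apply, ← hbs]
    have hres : x • r - A.mulVec r = (χ.eval x) • v := by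
      set f : ℕ → (Fin n → ℂ) := fun k => E k • b k with hf
      have hterm : ∀ k : ℕ, x • (E (k + 1) • b k) - E (k + 1) • b (k + 1) =
          (f k - f (k + 1)) - χ.coeff k • b k := by
        intro k
        rw [hf, smul_smul, hErec k, sub_smul]
        abel
      rw [hAr, hr, Finset.smul_sum, ← Finset.sum_sub_distrib]
      have : ∀ k : Fin n, x • (E ((k : ℕ) + 1) • b (k : ℕ)) - E ((k : ℕ) + 1) • b ((k : ℕ) + 1) =
          (f (k : ℕ) - f ((k : ℕ) + 1)) - χ.coeff (k : ℕ) • b (k : ℕ) := fun k => hterm (k : ℕ)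
      have hshift : ∑ k : Fin n, (f (k : ℕ) - f ((k : ℕ) + 1)) = f 0 - f n :=
        (Fin.sum_univ_eq_sum_range (fun k => f k - f (k + 1)) n).trans
          (Finset.sum_range_sub' f n)
      rw [Finset.sum_congr rfl (fun k _ => this k), Finset.sum_sub_distrib, hshift]
      have hfn : f n = b n := by show E n • b n = b n; rw [hEn, one_smul]
      have hf0 : f 0 = (χ.eval x) • v := by show E 0 • b 0 = _; rw [hE0, hb0]
      rw [hfn, hf0, hbn]
      abel
    set M : Matrix (Fin n) (Fin n) ℂ := x • (1 : Matrix (Fin n) (Fin n) ℂ) - A with hM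
    have hMdet : M.det = χ.eval x := (eval_charpoly' A x).symm
    have hMunit : IsUnit M.det := by rw [hMdet]; exact isUnit_iff_ne_zero.mpr hx
    have hMr : M.mulVec r = (χ.eval x) • v := by
      rw [hM, Matrix.sub_mulVec, Matrix.smul_mulVec, Matrix.one_mulVec]
      exact hres
    have hMinv : M⁻¹.mulVec v = (χ.eval x)⁻¹ • r := by
      have h1 : M⁻¹.mulVec (M.mulVec r) = r := by
        rw [Matrix.mulVec_mulVec, Matrix.nonsing_inv_mul M hMunit, Matrix.one_mulVec]
      rw [hMr, Matrix.mulVec_smul] at h1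
      rw [← h1, smul_smul, inv_mul_cancel₀ hx, one_smul]
    have hxB : x • (1 : Matrix (Fin n) (Fin n) ℂ) - B = M + vecMulVec v w := by
      rw [hM, ← hvw]
      abel
    have hdetB : B.charpoly.eval x = M.det * (1 + w ⬝ᵥ (M⁻¹.mulVec v)) := by
      rw [eval_charpoly' B x, hxB]
      have hsplit : M + vecMulVec v w =
          M * (1 + M⁻¹ * (replicateCol Unit v * replicateRow Unit w)) := by
        rw [Matrix.mul_add, Matrix.mul_one, ← Matrix.mul_assoc,
          Matrix.mul_nonsing_inv M hMunit, Matrix.one_mul, vecMulVec_eq (ι := Unit)]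
      rw [hsplit, Matrix.det_mul]
      congr 1
      rw [← Matrix.mul_assoc, ← Matrix.replicateCol_mulVec, Matrix.det_one_add_replicateCol_mul_replicateRow]
    rw [hdetB, hMinv, hMdet]
    have hwr : w ⬝ᵥ ((χ.eval x)⁻¹ • r) = (χ.eval x)⁻¹ * ∑ k : Fin n, c k *
        (Polynomial.divX^[(k:ℕ)+1] χ).eval x := by
      rw [dotProduct_smul, smul_eq_mul]
      congr 1
      have hdot : ∀ (s : Finset (Fin n)) (g : Fin n → (Fin n → ℂ)),
          w ⬝ᵥ (∑ j ∈ s, g j) = ∑ j ∈ s, w ⬝ᵥ g j := by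
        intro s g
        induction s using Finset.induction with
        | empty => simp
        | insert _ _ h ih => rw [Finset.sum_insert h, Finset.sum_insert h, dotProduct_add, ih]
      rw [hr, hdot]
      refine Finset.sum_congr rfl fun k _ => ?_
      rw [dotProduct_smul, smul_eq_mul, mul_comm]
    rw [hwr]
    field_simp
  exact ⟨P, c, hPunit, hAP, hBP, hcharid⟩



end Stmt16

theorem stmt_16 (n : ℕ) (hn : 2 ≤ n) (A B : Matrix (Fin n) (Fin n) ℂ)
    (hA : IsUnit A) (hB : IsUnit B)
    (hpr : (A * B⁻¹ - 1).rank = 1)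
    (hspec : spectrum ℂ A ∩ spectrum ℂ B = ∅) :
    ∀ A' B' : Matrix (Fin n) (Fin n) ℂ,
      (∃ P : Matrix (Fin n) (Fin n) ℂ, IsUnit P ∧ A' = P * A * P⁻¹) →
      (∃ Q : Matrix (Fin n) (Fin n) ℂ, IsUnit Q ∧ B' = Q * B * Q⁻¹) →
      (A' * B'⁻¹ - 1).rank = 1 →
      ∃ U : Matrix (Fin n) (Fin n) ℂ, IsUnit U ∧ A' = U * A * U⁻¹ ∧ B' = U * B * U⁻¹ := by
  rintro A' B' ⟨P₀, hP₀, hA'⟩ ⟨Q₀, hQ₀, hB'⟩ hpr'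
  have hn0 : 0 < n := by omega
  have hdetB : IsUnit B.det := (Matrix.isUnit_iff_isUnit_det B).mp hB
  have hA'u : IsUnit A' := by
    rw [hA']
    exact (hP₀.mul hA).mul (Matrix.isUnit_nonsing_inv_iff.mpr hP₀)
  have hB'u : IsUnit B' := by
    rw [hB']
    exact (hQ₀.mul hB).mul (Matrix.isUnit_nonsing_inv_iff.mpr hQ₀)
  have hdetB' : IsUnit B'.det := (Matrix.isUnit_iff_isUnit_det B').mp hB'u
  have hsub : ∀ (X Y : Matrix (Fin n) (Fin n) ℂ), IsUnit Y.det →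
      X - Y = (X * Y⁻¹ - 1) * Y := by
    intro X Y hY
    rw [Matrix.sub_mul, Matrix.one_mul, Matrix.mul_assoc, Matrix.nonsing_inv_mul Y hY,
      Matrix.mul_one]
  have hr1 : (A - B).rank = 1 := by
    rw [hsub A B hdetB, Matrix.rank_mul_eq_left_of_isUnit_det B _ hdetB]
    exact hpr
  have hr1' : (A' - B').rank = 1 := by
    rw [hsub A' B' hdetB', Matrix.rank_mul_eq_left_of_isUnit_det B' _ hdetB']
    exact hpr'
  obtain ⟨v, w, hvw⟩ := Stmt16.exists_vecMulVec (le_of_eq hr1)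
  obtain ⟨v', w', hvw'⟩ := Stmt16.exists_vecMulVec (le_of_eq hr1')
  have hχA : A'.charpoly = A.charpoly := by rw [hA']; exact Stmt16.charpoly_conj P₀ A hP₀
  have hχB : B'.charpoly = B.charpoly := by rw [hB']; exact Stmt16.charpoly_conj Q₀ B hQ₀
  have hdegA : A.charpoly.natDegree = n := by
    rw [Matrix.charpoly_natDegree_eq_dim, Fintype.card_fin]
  have hdisj : ∀ x : ℂ, A.charpoly.eval x = 0 → B.charpoly.eval x ≠ 0 := by
    intro x hxA hxB
    have hmem : x ∈ spectrum ℂ A ∩ spectrum ℂ B :=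
      ⟨(Stmt16.mem_spectrum_iff' A x).mpr hxA, (Stmt16.mem_spectrum_iff' B x).mpr hxB⟩
    rw [hspec] at hmem
    exact hmem
  have hdisj' : ∀ x : ℂ, A'.charpoly.eval x = 0 → B'.charpoly.eval x ≠ 0 := by
    intro x
    rw [hχA, hχB]
    exact hdisj x
  obtain ⟨P, c, hPu, hAP, hBP, hid⟩ := Stmt16.pair_canonical hn0 A B v w hvw hdisj
  obtain ⟨P', c', hP'u, hA'P, hB'P, hid'⟩ :=
    Stmt16.pair_canonical hn0 A' B' v' w' hvw' hdisj'
  rw [hχA] at hA'P hB'P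
  rw [hχA, hχB] at hid'
  have hcc : c = c' := Stmt16.c_unique hn0 A.charpoly_monic hdegA c c' hid hid'
  rw [← hcc] at hB'P
  have hPdet : IsUnit P.det := (Matrix.isUnit_iff_isUnit_det P).mp hPu
  have hP'det : IsUnit P'.det := (Matrix.isUnit_iff_isUnit_det P').mp hP'u
  have hUu : IsUnit (P' * P⁻¹) := hP'u.mul (Matrix.isUnit_nonsing_inv_iff.mpr hPu)
  have hUinv : (P' * P⁻¹)⁻¹ = P * P'⁻¹ := by
    rw [Matrix.mul_inv_rev, Matrix.nonsing_inv_nonsing_inv P hPdet]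
  have key : ∀ (X X' Y : Matrix (Fin n) (Fin n) ℂ), X * P = P * Y → X' * P' = P' * Y →
      X' = (P' * P⁻¹) * X * (P' * P⁻¹)⁻¹ := by
    intro X X' Y hXP hX'P
    have e1 : X' = X' * P' * P'⁻¹ := by
      rw [Matrix.mul_assoc, Matrix.mul_nonsing_inv _ hP'det, Matrix.mul_one]
    rw [hX'P] at e1
    have e2 : P⁻¹ * (X * P) = Y := by
      rw [hXP, ← Matrix.mul_assoc, Matrix.nonsing_inv_mul _ hPdet, Matrix.one_mul]
    rw [← e2] at e1
    rw [hUinv]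
    rw [e1]
    simp only [Matrix.mul_assoc]
  exact ⟨P' * P⁻¹, hUu, key A A' _ hAP hA'P, key B B' _ hBP hB'P⟩
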